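/- For real numbers s, t with s, t, s+t all non-integers, and every finitely supported sequence a, T_t(T_s(a)) = T_{s+t}(a), where (T_t a)_m = (sin(πt)/π)·Σ_{n∈ℤ} a_n/(m−n+t). -/

import Mathlib

open MeasureTheory Complex Real

noncomputable section


/-- exponential `x ↦ e^{2πicx}` -/
def ee (c : ℝ) : ℝ → ℂ := fun x => Complex.exp (2 * π * I * c * x)

lemma two_pi_I_ne : (2 * (π:ℂ) * I) ≠ 0 := by
  simp [Real.pi_ne_zero, Complex.I_ne_zero, Complex.ofReal_ne_zero]

lemma exp_two_pi_I_ne_one {c : ℝ} (hc : ∀ k : ℤ, c ≠ k) :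
    Complex.exp (2 * π * I * c) ≠ 1 := by
  intro h1
  rw [Complex.exp_eq_one_iff] at h1
  obtain ⟨k, hk⟩ := h1
  have : (c : ℂ) = k := by
    refine mul_left_cancel₀ two_pi_I_ne ?_
    linear_combination hk
  exact hc k (by exact_mod_cast this)

lemma fourierCoeff_ee (c : ℝ) (n : ℤ) (h : (c:ℂ) ≠ (n:ℂ)) :
    haveI : Fact ((0:ℝ) < 1) := ⟨one_pos⟩
    fourierCoeff (AddCircle.liftIco 1 0 (ee c)) n
      = (Complex.exp (2 * π * I * c) - 1) / (2 * π * I * ((c:ℂ) - n)) := by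
  haveI : Fact ((0:ℝ) < 1) := ⟨one_pos⟩
  rw [fourierCoeff_liftIco_eq, fourierCoeffOn_eq_integral]
  have hd : (2 * (π:ℂ) * I * ((c:ℂ) - n)) ≠ 0 := mul_ne_zero two_pi_I_ne (sub_ne_zero.2 h)
  have h1 : ∀ x : ℝ, (fourier (-n) (x : AddCircle ((0:ℝ) + 1 - 0))) • ee c x
      = Complex.exp ((2 * π * I * ((c:ℂ) - n)) * x) := by
    intro x
    rw [fourier_coe_apply, smul_eq_mul, ee, ← Complex.exp_add]
    congr 1
    push_cast
    field_simp
    ring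
  rw [intervalIntegral.integral_congr (fun x _ => h1 x), integral_exp_mul_complex hd]
  have h2 : Complex.exp (2 * (π:ℂ) * I * ((c:ℂ) - n)) = Complex.exp (2 * (π:ℂ) * I * c) := by
    rw [show (2*(π:ℂ)*I*((c:ℂ)-n)) = 2*(π:ℂ)*I*c + ((-n : ℤ):ℂ) * (2*(π:ℂ)*I) by push_cast; ring,
      Complex.exp_add, Complex.exp_int_mul_two_pi_mul_I, mul_one]
  norm_num [h2]

lemma norm_ee (c : ℝ) (x : ℝ) : ‖ee c x‖ = 1 := by
  rw [ee, Complex.norm_exp]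
  have : (2 * (π:ℂ) * I * c * x).re = 0 := by simp [Complex.mul_re, Complex.mul_im]
  rw [this, Real.exp_zero]

lemma measurable_lift (c : ℝ) :
    haveI : Fact ((0:ℝ) < 1) := ⟨one_pos⟩
    Measurable (AddCircle.liftIco 1 0 (ee c)) := by
  haveI : Fact ((0:ℝ) < 1) := ⟨one_pos⟩
  have h : AddCircle.liftIco 1 0 (ee c)
      = (Set.Ico (0:ℝ) (0+1)).restrict (ee c) ∘ (AddCircle.measurableEquivIco 1 0) := by
    ext x
    simp only [AddCircle.liftIco, Function.comp_apply, AddCircle.measurableEquivIco,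
      MeasurableEquiv.coe_mk]
    rfl
  rw [h]
  have hm : Measurable (ee c) := by
    have : Continuous (ee c) := by unfold ee; continuity
    exact this.measurable
  exact (hm.comp measurable_subtype_coe).comp (AddCircle.measurableEquivIco 1 0).measurable

lemma memLp_lift (c : ℝ) :
    haveI : Fact ((0:ℝ) < 1) := ⟨one_pos⟩
    MemLp (AddCircle.liftIco 1 0 (ee c)) 2 AddCircle.haarAddCircle := by
  haveI : Fact ((0:ℝ) < 1) := ⟨one_pos⟩
  refine MemLp.of_bound (measurable_lift c).aestronglyMeasurable 1 ?_
  refine Filter.Eventually.of_forall fun x => ?_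
  have : AddCircle.liftIco 1 0 (ee c) x = ee c ((AddCircle.equivIco 1 0 x : ℝ)) := rfl
  rw [this, norm_ee]

lemma fourierCoeff_congr_ae' {T : ℝ} [Fact (0 < T)] {f g : AddCircle T → ℂ}
    (h : f =ᵐ[AddCircle.haarAddCircle] g) (n : ℤ) : fourierCoeff f n = fourierCoeff g n := by
  unfold fourierCoeff
  exact integral_congr_ae (h.mono fun x hx => by simp only [hx])

lemma conj_ee_mul (a b y : ℝ) : (starRingEnd ℂ) (ee a y) * ee b y = ee (b - a) y := by
  unfold ee
  rw [← Complex.exp_conj, ← Complex.exp_add]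
  congr 1
  rw [map_mul, map_mul, map_mul, map_mul]
  simp only [Complex.conj_I, Complex.conj_ofReal, map_ofNat]
  push_cast
  ring

lemma parseval_ee (a b : ℝ) :
    haveI : Fact ((0:ℝ) < 1) := ⟨one_pos⟩
    HasSum (fun n : ℤ => (starRingEnd ℂ) (fourierCoeff (AddCircle.liftIco 1 0 (ee a)) n) *
        fourierCoeff (AddCircle.liftIco 1 0 (ee b)) n)
      (fourierCoeff (AddCircle.liftIco 1 0 (ee (b - a))) 0) := by
  haveI : Fact ((0:ℝ) < 1) := ⟨one_pos⟩
  set fa := (memLp_lift a).toLp _ with hfa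
  set fb := (memLp_lift b).toLp _ with hfb
  have H := HilbertBasis.hasSum_inner_mul_inner (fourierBasis (T := 1)) fa fb
  simp only [← inner_conj_symm fa, ← HilbertBasis.repr_apply_apply, fourierBasis_repr] at H
  have hinner : (inner ℂ fa fb : ℂ) = fourierCoeff (AddCircle.liftIco 1 0 (ee (b - a))) 0 := by
    rw [L2.inner_def]
    have h1 : (fun x : AddCircle 1 => (inner ℂ (fa x) (fb x) : ℂ))
        =ᵐ[AddCircle.haarAddCircle] fun x => AddCircle.liftIco 1 0 (ee (b - a)) x := by
      filter_upwards [(memLp_lift a).coeFn_toLp, (memLp_lift b).coeFn_toLp] with x h2 h3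
      rw [RCLike.inner_apply', h2, h3]
      have ha' : AddCircle.liftIco 1 0 (ee a) x = ee a ((AddCircle.equivIco 1 0 x : ℝ)) := rfl
      have hb' : AddCircle.liftIco 1 0 (ee b) x = ee b ((AddCircle.equivIco 1 0 x : ℝ)) := rfl
      have hc' : AddCircle.liftIco 1 0 (ee (b - a)) x
          = ee (b - a) ((AddCircle.equivIco 1 0 x : ℝ)) := rfl
      rw [ha', hb', hc', conj_ee_mul]
    rw [integral_congr_ae h1]
    unfold fourierCoeff
    simp [fourier_zero]
  rw [inner_conj_symm] at H
  rw [hinner] at H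
  refine H.congr_fun fun n => ?_
  rw [fourierCoeff_congr_ae' ((memLp_lift a).coeFn_toLp) n,
    fourierCoeff_congr_ae' ((memLp_lift b).coeFn_toLp) n]

lemma hasSum_key (a b : ℝ) (ha : ∀ k : ℤ, a ≠ (k:ℝ)) (hb : ∀ k : ℤ, b ≠ (k:ℝ))
    (hab : ∀ k : ℤ, b - a ≠ (k:ℝ)) :
    HasSum (fun n : ℤ => 1 / (((a:ℂ) - n) * ((b:ℂ) - n)))
      ((Complex.exp (2*π*I*((b:ℂ)-a)) - 1) * (4*(π:ℂ)^2) /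
        ((2*(π:ℂ)*I*((b:ℂ)-a)) *
          ((Complex.exp (2*π*I*(-(a:ℂ))) - 1) * (Complex.exp (2*π*I*(b:ℂ)) - 1)))) := by
  haveI : Fact ((0:ℝ) < 1) := ⟨one_pos⟩
  have hP := parseval_ee a b
  have hKa : Complex.exp (2*π*I*(-(a:ℂ))) - 1 ≠ 0 := by
    refine sub_ne_zero.2 ?_
    have := exp_two_pi_I_ne_one (c := -a) (fun k hk => ha (-k) (by push_cast at hk ⊢; linarith))
    convert this using 2
    push_cast; ring
  have hKb : Complex.exp (2*π*I*(b:ℂ)) - 1 ≠ 0 :=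
    sub_ne_zero.2 (exp_two_pi_I_ne_one hb)
  set K : ℂ := (Complex.exp (2*π*I*(-(a:ℂ))) - 1) * (Complex.exp (2*π*I*(b:ℂ)) - 1) / (4*(π:ℂ)^2)
    with hK
  have hπ : ((π:ℂ)) ≠ 0 := Complex.ofReal_ne_zero.2 Real.pi_ne_zero
  have hKne : K ≠ 0 := by
    rw [hK]
    exact div_ne_zero (mul_ne_zero hKa hKb) (by simp [hπ])
  have hterm : ∀ n : ℤ, (starRingEnd ℂ) (fourierCoeff (AddCircle.liftIco 1 0 (ee a)) n) *
      fourierCoeff (AddCircle.liftIco 1 0 (ee b)) n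
        = K * (1 / (((a:ℂ) - n) * ((b:ℂ) - n))) := by
    intro n
    have han : (a:ℂ) ≠ (n:ℂ) := by
      intro h; exact ha n (by exact_mod_cast h)
    have hbn : (b:ℂ) ≠ (n:ℂ) := by
      intro h; exact hb n (by exact_mod_cast h)
    rw [fourierCoeff_ee a n han, fourierCoeff_ee b n hbn]
    rw [map_div₀, map_sub, map_one, ← Complex.exp_conj]
    have h1 : (starRingEnd ℂ) (2*(π:ℂ)*I*(a:ℂ)) = 2*(π:ℂ)*I*(-(a:ℂ)) := by
      rw [map_mul, map_mul, map_mul]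
      simp only [Complex.conj_I, Complex.conj_ofReal, map_ofNat]
      ring
    have h2 : (starRingEnd ℂ) (2*(π:ℂ)*I*((a:ℂ) - n)) = -(2*(π:ℂ)*I*((a:ℂ) - n)) := by
      rw [map_mul, map_mul, map_mul, map_sub]
      simp only [Complex.conj_I, Complex.conj_ofReal, map_ofNat, map_intCast]
      ring
    rw [h1, h2]
    have hden : (2*(π:ℂ)*I*((a:ℂ)-n))*(2*(π:ℂ)*I*((b:ℂ)-n))
        = -(4*(π:ℂ)^2*(((a:ℂ)-n)*((b:ℂ)-n))) := by
      linear_combination (4*(π:ℂ)^2*((a:ℂ)-n)*((b:ℂ)-n)) * Complex.I_sq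
    rw [div_neg, neg_mul, div_mul_div_comm, hden, div_neg, neg_neg, hK, div_mul_div_comm, mul_one]
  have H2 : HasSum (fun n : ℤ => K * (1 / (((a:ℂ) - n) * ((b:ℂ) - n))))
      (fourierCoeff (AddCircle.liftIco 1 0 (ee (b - a))) 0) :=
    hP.congr_fun fun n => (hterm n).symm
  have H3 := H2.mul_left K⁻¹
  simp_rw [inv_mul_cancel_left₀ hKne] at H3
  have hba : ((b:ℂ) - a) ≠ 0 := by
    intro h
    have h0 : ((b - a : ℝ) : ℂ) = 0 := by push_cast; linear_combination h
    exact hab 0 (by exact_mod_cast h0)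
  have e1 : (((b-a:ℝ)):ℂ) = (b:ℂ) - a := by push_cast; ring
  have hval : K⁻¹ * fourierCoeff (AddCircle.liftIco 1 0 (ee (b - a))) 0
      = (Complex.exp (2*π*I*((b:ℂ)-a)) - 1) * (4*(π:ℂ)^2) /
        ((2*(π:ℂ)*I*((b:ℂ)-a)) *
          ((Complex.exp (2*π*I*(-(a:ℂ))) - 1) * (Complex.exp (2*π*I*(b:ℂ)) - 1))) := by
    rw [fourierCoeff_ee (b-a) 0 (by rw [e1]; simpa using hba), hK, e1]
    rw [Int.cast_zero, sub_zero]
    field_simp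
  rwa [hval] at H3

lemma exp_sub_one (x : ℝ) : Complex.exp (2*π*I*(x:ℂ)) - 1
    = 2*I*Complex.exp (((π*x:ℝ):ℂ)*I) * Complex.sin (((π*x:ℝ):ℂ)) := by
  have h : (2*(π:ℂ)*I*(x:ℂ)) = ((π*x:ℝ):ℂ)*I + ((π*x:ℝ):ℂ)*I := by push_cast; ring
  rw [h, Complex.exp_add, Complex.exp_mul_I]
  linear_combination Complex.sin_sq_add_cos_sq (((π*x:ℝ):ℂ)) -
    (Complex.sin (((π*x:ℝ):ℂ)))^2 * Complex.I_sq

lemma sin_ne_zero_of_ne_int {x : ℝ} (hx : ∀ k : ℤ, x ≠ (k:ℝ)) :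
    Complex.sin (((π*x:ℝ):ℂ)) ≠ 0 := by
  intro h
  rw [Complex.sin_eq_zero_iff] at h
  obtain ⟨k, hk⟩ := h
  have : π * x = k * π := by exact_mod_cast hk
  exact hx k (mul_left_cancel₀ Real.pi_ne_zero (by linear_combination this))

lemma per_term_alg (s t : ℝ) (hs : ∀ k : ℤ, s ≠ (k:ℝ)) (ht : ∀ k : ℤ, t ≠ (k:ℝ)) (γ : ℂ)
    (hγ : γ ≠ 0) :
    ((Real.sin (π*s) : ℂ)) * ((Real.sin (π*t) : ℂ)) *
      (-((Complex.exp (2*π*I*((s+t:ℝ):ℂ)) - 1) * (4*(π:ℂ)^2) /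
        ((2*(π:ℂ)*I*γ) *
          ((Complex.exp (2*π*I*((s:ℝ):ℂ)) - 1) * (Complex.exp (2*π*I*((t:ℝ):ℂ)) - 1)))))
      = (π:ℂ) * ((Real.sin (π*(s+t)) : ℂ)) / γ := by
  have hπ : ((π:ℂ)) ≠ 0 := Complex.ofReal_ne_zero.2 Real.pi_ne_zero
  have hss := sin_ne_zero_of_ne_int hs
  have hst := sin_ne_zero_of_ne_int ht
  have hes : Complex.exp (((π*s:ℝ):ℂ)*I) ≠ 0 := Complex.exp_ne_zero _
  have het : Complex.exp (((π*t:ℝ):ℂ)*I) ≠ 0 := Complex.exp_ne_zero _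
  rw [exp_sub_one, exp_sub_one, exp_sub_one]
  have hadd : Complex.exp (((π*(s+t):ℝ):ℂ)*I)
      = Complex.exp (((π*s:ℝ):ℂ)*I) * Complex.exp (((π*t:ℝ):ℂ)*I) := by
    rw [← Complex.exp_add]
    congr 1
    push_cast; ring
  have hsin_add : Complex.sin (((π*(s+t):ℝ):ℂ)) = Complex.sin (((π*s:ℝ):ℂ) + ((π*t:ℝ):ℂ)) := by
    congr 1; push_cast; ring
  rw [Complex.ofReal_sin, Complex.ofReal_sin, Complex.ofReal_sin, hadd]
  rw [show ((π*(s+t) : ℝ):ℂ) = ((π*s:ℝ):ℂ) + ((π*t:ℝ):ℂ) by push_cast; ring] at hsin_add ⊢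
  push_cast at hss hst hes het hadd ⊢
  field_simp [Complex.I_ne_zero]
  ring_nf
  rw [Complex.I_sq]
  ring

lemma exp_int_shift (x : ℝ) (k : ℤ) :
    Complex.exp (2*π*I*((x:ℂ)+(k:ℂ))) = Complex.exp (2*π*I*(x:ℂ)) := by
  rw [mul_add, Complex.exp_add, show 2*(π:ℂ)*I*(k:ℂ) = (k:ℂ)*(2*π*I) by ring,
    Complex.exp_int_mul_two_pi_mul_I, mul_one]

/-- Value of the cross sum. -/
def Vval (s t : ℝ) (m n : ℤ) : ℂ :=
  -((Complex.exp (2*π*I*((s+t:ℝ):ℂ)) - 1) * (4*(π:ℂ)^2) /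
    ((2*(π:ℂ)*I*((m:ℂ) - n + s + t)) *
      ((Complex.exp (2*π*I*((s:ℝ):ℂ)) - 1) * (Complex.exp (2*π*I*((t:ℝ):ℂ)) - 1))))

lemma hasSum_app (s t : ℝ) (hs : ∀ k : ℤ, s ≠ (k:ℝ)) (ht : ∀ k : ℤ, t ≠ (k:ℝ))
    (hst : ∀ k : ℤ, s + t ≠ (k:ℝ)) (m n : ℤ) :
    HasSum (fun j : ℤ => 1 / (((j:ℂ) - n + s) * ((m:ℂ) - j + t))) (Vval s t m n) := by
  rw [Vval]
  have ha : ∀ k : ℤ, (n:ℝ) - s ≠ (k:ℝ) := by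
    intro k hk; exact hs (n - k) (by push_cast; linarith)
  have hb : ∀ k : ℤ, (m:ℝ) + t ≠ (k:ℝ) := by
    intro k hk; exact ht (k - m) (by push_cast; linarith)
  have hab : ∀ k : ℤ, ((m:ℝ) + t) - ((n:ℝ) - s) ≠ (k:ℝ) := by
    intro k hk; exact hst (k - m + n) (by push_cast; linarith)
  have H := (hasSum_key ((n:ℝ) - s) ((m:ℝ) + t) ha hb hab).neg
  have e1 : ((((m:ℝ) + t : ℝ)):ℂ) - (((n:ℝ) - s : ℝ):ℂ) = (m:ℂ) - n + s + t := by
    push_cast; ring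
  rw [e1] at H
  rw [show ((m:ℂ) - n + s + t) = ((s+t:ℝ):ℂ) + ((m - n : ℤ):ℂ) by push_cast; ring] at H
  rw [exp_int_shift] at H
  rw [show (-((((n:ℝ) - s : ℝ)):ℂ)) = ((s:ℝ):ℂ) + ((-n : ℤ):ℂ) by push_cast; ring] at H
  rw [exp_int_shift] at H
  rw [show ((((m:ℝ) + t : ℝ)):ℂ) = ((t:ℝ):ℂ) + ((m : ℤ):ℂ) by push_cast; ring] at H
  rw [exp_int_shift] at H
  rw [show ((s+t:ℝ):ℂ) + ((m - n : ℤ):ℂ) = (m:ℂ) - n + s + t by push_cast; ring] at H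
  refine H.congr_fun fun j => ?_
  rw [show ((((n:ℝ) - s : ℝ)):ℂ) - (j:ℂ) = -((j:ℂ) - n + s) by push_cast; ring,
    show ((t:ℂ) + (m:ℂ) - (j:ℂ)) = ((m:ℂ) - j + t) by ring,
    neg_mul, div_neg, neg_neg]

end

/-- The operator `T_t` for non-integer `t`:
`(T_t a)_m = (sin(πt)/π)·∑_{n∈ℤ} a_n/(m−n+t)`. -/
noncomputable def Tns (t : ℝ) (a : ℤ → ℂ) (m : ℤ) : ℂ :=
  ((Real.sin (Real.pi * t) / Real.pi : ℝ) : ℂ) *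
    ∑' n : ℤ, a n / ((m : ℂ) - (n : ℂ) + (t : ℂ))

/-- Group law for non-integer parameters: if `s`, `t`, `s+t` are all non-integer and
`a` is finitely supported, then `T_t(T_s(a)) = T_{s+t}(a)`. -/
theorem stmt_10 (s t : ℝ) (hs : ∀ k : ℤ, s ≠ (k : ℝ)) (ht : ∀ k : ℤ, t ≠ (k : ℝ))
    (hst : ∀ k : ℤ, s + t ≠ (k : ℝ)) (a : ℤ → ℂ) (ha : (Function.support a).Finite) :
    ∀ m : ℤ, Tns t (fun j => Tns s a j) m = Tns (s + t) a m := by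
  classical
  intro m
  set F := ha.toFinset with hF
  have hπ : ((π:ℂ)) ≠ 0 := Complex.ofReal_ne_zero.2 Real.pi_ne_zero
  have hγ : ∀ n : ℤ, ((m:ℂ) - n + s + t) ≠ 0 := by
    intro n h
    have h0 : ((s + t - ((n : ℝ) - m) : ℝ) : ℂ) = 0 := by push_cast; linear_combination h
    have h1 : s + t = ((n - m : ℤ) : ℝ) := by
      have := Complex.ofReal_eq_zero.1 h0
      push_cast
      linarith
    exact hst (n - m) h1
  have hzero : ∀ n : ℤ, n ∉ F → a n = 0 := by
    intro n hn
    rw [hF, Set.Finite.mem_toFinset] at hn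
    exact Function.notMem_support.mp hn
  -- the inner operator as a finite sum
  have hTns : ∀ j : ℤ, Tns s a j
      = ((Real.sin (Real.pi * s) / Real.pi : ℝ) : ℂ) * ∑ n ∈ F, a n / ((j:ℂ) - n + s) := by
    intro j
    rw [Tns, tsum_eq_sum (s := F) (fun n hn => by rw [hzero n hn, zero_div])]
  -- the values of the inner sums
  have hsum : ∀ n : ℤ, HasSum (fun j : ℤ => 1 / (((j:ℂ) - n + s) * ((m:ℂ) - j + t)))
      (Vval s t m n) := fun n => hasSum_app s t hs ht hst m n
  have step1 : Tns t (fun j => Tns s a j) m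
      = ((Real.sin (Real.pi * t) / Real.pi : ℝ) : ℂ) *
          ∑' j : ℤ, ∑ n ∈ F, (((Real.sin (Real.pi * s) / Real.pi : ℝ) : ℂ) * a n) *
            (1 / (((j:ℂ) - n + s) * ((m:ℂ) - j + t))) := by
    rw [Tns]
    congr 1
    refine tsum_congr fun j => ?_
    rw [hTns j, Finset.mul_sum, Finset.sum_div]
    refine Finset.sum_congr rfl fun n _ => ?_
    rw [mul_div_assoc', div_div, mul_one_div]
  rw [step1, Summable.tsum_finsetSum (fun n _ => ((hsum n).mul_left _).summable)]
  have step2 : ∀ n ∈ F, ∑' j : ℤ, (((Real.sin (Real.pi * s) / Real.pi : ℝ) : ℂ) * a n) *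
      (1 / (((j:ℂ) - n + s) * ((m:ℂ) - j + t)))
        = (((Real.sin (Real.pi * s) / Real.pi : ℝ) : ℂ) * a n) * Vval s t m n :=
    fun n _ => ((hsum n).mul_left _).tsum_eq
  rw [Finset.sum_congr rfl step2]
  rw [Tns, tsum_eq_sum (s := F) (fun n hn => by rw [hzero n hn, zero_div]), Finset.mul_sum,
    Finset.mul_sum]
  refine Finset.sum_congr rfl fun n _ => ?_
  have key := per_term_alg s t hs ht ((m:ℂ) - n + s + t) (hγ n)
  have key' : ((Real.sin (π*s) : ℂ)) * ((Real.sin (π*t) : ℂ)) * Vval s t m n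
      * ((m:ℂ) - n + s + t) = (π:ℂ) * ((Real.sin (π*(s+t)) : ℂ)) := by
    rw [Vval, key, div_mul_cancel₀ _ (hγ n)]
  push_cast
  push_cast at key'
  have hγ' : ((m:ℂ) - n + ((s:ℂ) + t)) ≠ 0 := by
    intro h; exact hγ n (by linear_combination h)
  field_simp
  linear_combination (a n) * key'
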